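/- Define the hyperfactorial h(n) = 0!·1!·⋯·(n-1)!. For nonnegative integers n, a, b with a + b = n, the quantity 2^{n(n+1)/2} · n! · h(2n+1) · h(a) · h(b) / (h(n+a+1) · h(n+b+1)) is a positive integer. -/

import Mathlib

set_option maxHeartbeats 1000000
section ElbowAux
open Nat Finset
/-- The hyperfactorial h(n) = 0!·1!·⋯·(n-1)!. -/
def hyp (n : ℕ) : ℕ := ∏ i ∈ Finset.range n, i !

/-- Sum of floors `∑_{m<n} ⌊m/q⌋`. -/
def Sf (q n : ℕ) : ℕ := ∑ m ∈ Finset.range n, m / q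





lemma Sf_closed (q : ℕ) (hq : 0 < q) (n : ℕ) :
    (2 * q * Sf q n : ℤ) = (n:ℤ)^2 - n*q - ((n % q : ℕ):ℤ)^2 + ((n % q : ℕ):ℤ)*q := by
  induction n with
  | zero => simp [Sf]
  | succ n ih =>
    have hS : Sf q (n+1) = Sf q n + n / q := Finset.sum_range_succ _ _
    have hmd : ((n % q : ℕ):ℤ) + (q:ℤ) * ((n / q : ℕ):ℤ) = (n:ℤ) := by
      exact_mod_cast Nat.mod_add_div n q
    have hlt : n % q < q := Nat.mod_lt _ hq
    have hm1 : (n + 1) % q = (n % q + 1) % q := by rw [Nat.add_mod, Nat.add_mod_mod]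
    rw [hS, Nat.cast_add, mul_add, show ((n+1:ℕ):ℤ) = (n:ℤ) + 1 from by push_cast; ring]
    rcases eq_or_lt_of_le (Nat.succ_le_of_lt hlt) with h | h
    · have hm' : (n + 1) % q = 0 := by
        rw [hm1, show n % q + 1 = q from h, Nat.mod_self]
      have hr : ((n % q : ℕ) : ℤ) = (q:ℤ) - 1 := by
        have h2 : (n % q : ℕ) + 1 = q := h
        have : ((n % q : ℕ) + 1 : ℤ) = (q:ℤ) := by exact_mod_cast h2
        linarith
      rw [hr] at hmd
      rw [hm', ih, hr]
      simp only [Nat.cast_zero]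
      linear_combination 2 * hmd
    · have hm' : (n + 1) % q = n % q + 1 := by rw [hm1]; exact Nat.mod_eq_of_lt h
      rw [hm', ih, show ((n % q + 1 : ℕ):ℤ) = ((n % q : ℕ):ℤ) + 1 from by push_cast; ring]
      linear_combination 2 * hmd



lemma pairMod (q u : ℕ) (hq : 0 < q) (h : u < 2 * q) :
    ((u % q : ℕ):ℤ) = u ∨ ((u % q : ℕ):ℤ) = (u:ℤ) - q := by
  rcases Nat.lt_or_ge u q with h1 | h1
  · left; exact_mod_cast Nat.mod_eq_of_lt h1
  · right
    have h2 : u % q = u - q := by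
      rw [Nat.mod_eq_sub_mod h1, Nat.mod_eq_of_lt (by omega)]
    omega

lemma tripleMod (q u : ℕ) (hq : 0 < q) (h : u < 3 * q) :
    ((u % q : ℕ):ℤ) = u ∨ ((u % q : ℕ):ℤ) = (u:ℤ) - q ∨ ((u % q : ℕ):ℤ) = (u:ℤ) - 2 * q := by
  rcases Nat.lt_or_ge u (2 * q) with h1 | h1
  · rcases pairMod q u hq h1 with h2 | h2
    · exact Or.inl h2
    · exact Or.inr (Or.inl h2)
  · right; right
    have h2 : u % q = u - 2 * q := by
      rw [Nat.mod_eq_sub_mod (by omega), Nat.mod_eq_sub_mod (by omega : q ≤ u - q),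
        Nat.mod_eq_of_lt (by omega)]
      omega
    omega

lemma mod_ineq (q x y z : ℕ) (hq : 0 < q) (hx : x < q) (hy : y < q) (hz : z < q) :
    (((x+y) % q : ℕ):ℤ) * (q - ((x+y) % q : ℕ)) + (((y+z) % q : ℕ):ℤ) * (q - ((y+z) % q : ℕ))
      + (((z+x) % q : ℕ):ℤ) * (q - ((z+x) % q : ℕ))
    ≤ (x:ℤ) * (q - x) + (y:ℤ) * (q - y) + (z:ℤ) * (q - z)
      + (((x+y+z) % q : ℕ):ℤ) * (q - ((x+y+z) % q : ℕ)) := by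
  have hx' : (x:ℤ) < q := by exact_mod_cast hx
  have hy' : (y:ℤ) < q := by exact_mod_cast hy
  have hz' : (z:ℤ) < q := by exact_mod_cast hz
  have hx0 : (0:ℤ) ≤ x := Int.ofNat_nonneg x
  have hy0 : (0:ℤ) ≤ y := Int.ofNat_nonneg y
  have hz0 : (0:ℤ) ≤ z := Int.ofNat_nonneg z
  have hq0 : (0:ℤ) ≤ q := Int.ofNat_nonneg q
  have hm1 : (0:ℤ) ≤ (((x+y) % q : ℕ):ℤ) := Int.ofNat_nonneg _
  have hm2 : (0:ℤ) ≤ (((y+z) % q : ℕ):ℤ) := Int.ofNat_nonneg _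
  have hm3 : (0:ℤ) ≤ (((z+x) % q : ℕ):ℤ) := Int.ofNat_nonneg _
  have hm4 : (0:ℤ) ≤ (((x+y+z) % q : ℕ):ℤ) := Int.ofNat_nonneg _
  have hb1 : (((x+y) % q : ℕ):ℤ) < q := by exact_mod_cast Nat.mod_lt _ hq
  have hb2 : (((y+z) % q : ℕ):ℤ) < q := by exact_mod_cast Nat.mod_lt _ hq
  have hb3 : (((z+x) % q : ℕ):ℤ) < q := by exact_mod_cast Nat.mod_lt _ hq
  have hb4 : (((x+y+z) % q : ℕ):ℤ) < q := by exact_mod_cast Nat.mod_lt _ hq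
  rcases pairMod q (x+y) hq (by omega) with e1 | e1 <;>
  rcases pairMod q (y+z) hq (by omega) with e2 | e2 <;>
  rcases pairMod q (z+x) hq (by omega) with e3 | e3 <;>
  rcases tripleMod q (x+y+z) hq (by omega) with e4 | e4 | e4
  all_goals (
    rw [e1] at hm1 hb1
    rw [e2] at hm2 hb2
    rw [e3] at hm3 hb3
    rw [e4] at hm4 hb4
    rw [e1, e2, e3, e4]
    push_cast at hm1 hm2 hm3 hm4 hb1 hb2 hb3 hb4 ⊢
    linarith [mul_nonneg hq0 hx0, mul_nonneg hq0 hy0, mul_nonneg hq0 hz0,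
      mul_nonneg hq0 (sub_nonneg.mpr hx'.le), mul_nonneg hq0 (sub_nonneg.mpr hy'.le),
      mul_nonneg hq0 (sub_nonneg.mpr hz'.le),
      mul_nonneg hq0 hm4, mul_nonneg hq0 (sub_nonneg.mpr hb4.le)])


lemma Sf_ineq (q a b c : ℕ) (hq : 0 < q) :
    Sf q (a+b) + Sf q (b+c) + Sf q (c+a) ≤ Sf q a + Sf q b + Sf q c + Sf q (a+b+c) := by
  have key := mod_ineq q (a % q) (b % q) (c % q) hq (Nat.mod_lt _ hq) (Nat.mod_lt _ hq)
    (Nat.mod_lt _ hq)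
  have hab : (a % q + b % q) % q = (a + b) % q := (Nat.add_mod a b q).symm
  have hbc : (b % q + c % q) % q = (b + c) % q := (Nat.add_mod b c q).symm
  have hca : (c % q + a % q) % q = (c + a) % q := (Nat.add_mod c a q).symm
  have habc : (a % q + b % q + c % q) % q = (a + b + c) % q := by
    rw [Nat.add_mod (a % q + b % q), Nat.mod_mod_of_dvd c dvd_rfl, hab, Nat.mod_add_mod, Nat.add_mod_mod]
  rw [hab, hbc, hca, habc] at key
  have expand : ∀ n : ℕ, (2 * q * Sf q n : ℤ)
      = (n:ℤ)^2 - n*q - ((n % q : ℕ):ℤ)^2 + ((n % q : ℕ):ℤ)*q := Sf_closed q hq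
  have h2q : (0:ℤ) < 2 * q := by positivity
  have main : (2 * q : ℤ) * ((Sf q (a+b) + Sf q (b+c) + Sf q (c+a) : ℕ) : ℤ)
      ≤ (2 * q : ℤ) * ((Sf q a + Sf q b + Sf q c + Sf q (a+b+c) : ℕ) : ℤ) := by
    have e1 := expand (a+b); have e2 := expand (b+c); have e3 := expand (c+a)
    have e4 := expand a; have e5 := expand b; have e6 := expand c; have e7 := expand (a+b+c)
    set A := ((a % q : ℕ):ℤ) with hA
    set B := ((b % q : ℕ):ℤ) with hB
    set C := ((c % q : ℕ):ℤ) with hC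
    set M1 := (((a+b) % q : ℕ):ℤ) with hM1
    set M2 := (((b+c) % q : ℕ):ℤ) with hM2
    set M3 := (((c+a) % q : ℕ):ℤ) with hM3
    set M4 := (((a+b+c) % q : ℕ):ℤ) with hM4
    push_cast at e1 e2 e3 e4 e5 e6 e7 ⊢
    linarith [key, e1, e2, e3, e4, e5, e6, e7]
  have := le_of_mul_le_mul_left main h2q
  exact_mod_cast this


lemma hyp_pos (n : ℕ) : 0 < hyp n := Finset.prod_pos fun i _ => Nat.factorial_pos i

lemma factorization_hyp (p : ℕ) (hp : p.Prime) (n B : ℕ) (hB : n ≤ B) :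
    (hyp n).factorization p = ∑ i ∈ Finset.Ico 1 B, Sf (p ^ i) n := by
  rw [hyp, Nat.factorization_prod (fun i _ => Nat.factorial_ne_zero i)]
  rw [Finset.sum_apply']
  have hterm : ∀ m ∈ Finset.range n, (m !).factorization p = ∑ i ∈ Finset.Ico 1 B, m / p ^ i := by
    intro m hm
    haveI : Fact p.Prime := ⟨hp⟩
    rw [Nat.factorization_def _ hp]
    exact padicValNat_factorial (lt_of_le_of_lt (Nat.log_le_self p m)
      (lt_of_lt_of_le (Finset.mem_range.mp hm) hB))
  rw [Finset.sum_congr rfl hterm, Finset.sum_comm]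
  rfl

lemma macmahon (a b c : ℕ) :
    hyp (a+b) * hyp (b+c) * hyp (c+a) ∣ hyp a * hyp b * hyp c * hyp (a+b+c) := by
  have hne : ∀ n, hyp n ≠ 0 := fun n => (hyp_pos n).ne'
  rw [← Nat.factorization_le_iff_dvd
    (Nat.mul_ne_zero (Nat.mul_ne_zero (hne _) (hne _)) (hne _))
    (Nat.mul_ne_zero (Nat.mul_ne_zero (Nat.mul_ne_zero (hne _) (hne _)) (hne _)) (hne _))]
  intro p
  by_cases hp : p.Prime
  · have hmul : ∀ u v w x : ℕ, u ≠ 0 → v ≠ 0 → w ≠ 0 → x ≠ 0 →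
        (u * v * w * x).factorization p = u.factorization p + v.factorization p
          + w.factorization p + x.factorization p := by
      intro u v w x hu hv hw hx
      rw [Nat.factorization_mul (by positivity) hx, Nat.factorization_mul (by positivity) hw,
        Nat.factorization_mul hu hv]
      rfl
    have hmul3 : ∀ u v w : ℕ, u ≠ 0 → v ≠ 0 → w ≠ 0 →
        (u * v * w).factorization p = u.factorization p + v.factorization p
          + w.factorization p := by
      intro u v w hu hv hw
      rw [Nat.factorization_mul (by positivity) hw, Nat.factorization_mul hu hv]
      rfl
    rw [hmul3 _ _ _ (hne _) (hne _) (hne _), hmul _ _ _ _ (hne _) (hne _) (hne _) (hne _)]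
    set B := a + b + c + 1 with hBdef
    rw [factorization_hyp p hp (a+b) B (by omega), factorization_hyp p hp (b+c) B (by omega),
      factorization_hyp p hp (c+a) B (by omega), factorization_hyp p hp a B (by omega),
      factorization_hyp p hp b B (by omega), factorization_hyp p hp c B (by omega),
      factorization_hyp p hp (a+b+c) B (by omega)]
    rw [← Finset.sum_add_distrib, ← Finset.sum_add_distrib, ← Finset.sum_add_distrib,
      ← Finset.sum_add_distrib, ← Finset.sum_add_distrib]
    exact Finset.sum_le_sum fun i _ => Sf_ineq (p ^ i) a b c (pow_pos hp.pos i)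
  · simp [Nat.factorization_eq_zero_of_not_prime _ hp]


end ElbowAux

open Nat


/-- The elbow-region formula of Theorem 2.2 is a positive integer. -/
theorem stmt_2 (n a b : ℕ) (hab : a + b = n) :
    ∃ N : ℕ, 0 < N ∧ (N : ℚ) =
      2 ^ (n * (n + 1) / 2) * n ! * hyp (2 * n + 1) * hyp a * hyp b /
        (hyp (n + a + 1) * hyp (n + b + 1)) := by
  have key := macmahon a b (n + 1)
  rw [hab] at key
  have e1 : b + (n + 1) = n + b + 1 := by omega
  have e2 : n + 1 + a = n + a + 1 := by omega
  have e3 : n + (n + 1) = 2 * n + 1 := by omega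
  rw [e1, e2, e3] at key
  have hsucc : hyp (n + 1) = hyp n * n ! := Finset.prod_range_succ _ _
  rw [hsucc] at key
  -- cancel hyp n
  obtain ⟨k, hk⟩ := key
  have hdvd : hyp (n + a + 1) * hyp (n + b + 1) ∣ n ! * hyp (2 * n + 1) * hyp a * hyp b := by
    refine ⟨k, Nat.eq_of_mul_eq_mul_left (hyp_pos n) ?_⟩
    calc hyp n * (n ! * hyp (2 * n + 1) * hyp a * hyp b)
        = hyp a * hyp b * (hyp n * n !) * hyp (2 * n + 1) := by ring
      _ = hyp n * hyp (n + b + 1) * hyp (n + a + 1) * k := hk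
      _ = hyp n * (hyp (n + a + 1) * hyp (n + b + 1) * k) := by ring
  have hdvd2 : hyp (n + a + 1) * hyp (n + b + 1) ∣
      2 ^ (n * (n + 1) / 2) * (n ! * hyp (2 * n + 1) * hyp a * hyp b) :=
    Dvd.dvd.mul_left hdvd _
  have hDpos : 0 < hyp (n + a + 1) * hyp (n + b + 1) := Nat.mul_pos (hyp_pos _) (hyp_pos _)
  have hNumPos : 0 < 2 ^ (n * (n + 1) / 2) * (n ! * hyp (2 * n + 1) * hyp a * hyp b) := by
    have := hyp_pos (2 * n + 1); have := hyp_pos a; have := hyp_pos b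
    have := Nat.factorial_pos n
    positivity
  refine ⟨2 ^ (n * (n + 1) / 2) * (n ! * hyp (2 * n + 1) * hyp a * hyp b) /
      (hyp (n + a + 1) * hyp (n + b + 1)), ?_, ?_⟩
  · exact Nat.div_pos (Nat.le_of_dvd hNumPos hdvd2) hDpos
  · rw [Nat.cast_div hdvd2 (by exact_mod_cast hDpos.ne')]
    push_cast
    ring
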